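/- Let d ≥ 3, m ≥ 1, ω ∈ Ω_{d,m}, and ξ, η ∈ X^ℕ. Then (Γ_ξ, ξ) and (Γ_η, η) are isomorphic as rooted, undirected, unlabeled graphs if and only if ξ ∼ η. -/

import Mathlib

open MeasureTheory

noncomputable section

/-- The boundary of the `d`-regular rooted tree: infinite words over `X = {0,…,d-1}`,
identified with `ZMod d`. -/
abbrev Bd (d : ℕ) : Type := ℕ → ZMod d
/-- The rooted automorphism `a`: adds 1 (mod `d`) to the first letter. -/
def aMap (d : ℕ) (ξ : Bd d) : Bd d := fun n => if n = 0 then ξ 0 + 1 else ξ n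

open scoped Classical in
/-- The spinal automorphism `b_ω`: if `ξ` starts with `(d-1)^r 0`, add `ω r b` to the
letter at position `r + 1`; otherwise fix `ξ`. -/
def bMap (d m : ℕ) (ω : ℕ → ((Fin m → ZMod d) →+ ZMod d)) (b : Fin m → ZMod d)
    (ξ : Bd d) : Bd d := fun n =>
  if n ≠ 0 ∧ (∀ i, i < n - 1 → ξ i = (d : ZMod d) - 1) ∧ ξ (n - 1) = 0 then
    ξ n + ω (n - 1) b
  else ξ n
/-- The spinal generating set `S = {a^j : 1 ≤ j ≤ d-1} ∪ {b_ω : b ∈ B ∖ {0}}`,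
as a set of self-maps of the boundary. -/
def genSet (d m : ℕ) (ω : ℕ → ((Fin m → ZMod d) →+ ZMod d)) : Set (Bd d → Bd d) :=
  {f | ∃ j, 1 ≤ j ∧ j ≤ d - 1 ∧ f = (aMap d)^[j]} ∪ {f | ∃ b, b ≠ 0 ∧ f = bMap d m ω b}
/-- Membership in `Ω_{d,m}`: all `ω_n` are surjective and `⋂_{j ≥ i} ker ω_j = {0}`
for every `i ≥ 0`. -/
def InOmega (d m : ℕ) (ω : ℕ → ((Fin m → ZMod d) →+ ZMod d)) : Prop :=
  (∀ n, Function.Surjective (ω n)) ∧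
  ∀ i : ℕ, ∀ b : Fin m → ZMod d, (∀ j, i ≤ j → ω j b = 0) → b = 0
/-- Two boundary points are cofinal if they agree at all sufficiently large positions. -/
def Cofinal {d : ℕ} (ξ η : Bd d) : Prop := ∃ N, ∀ n, N ≤ n → ξ n = η n

/-- The cofinality class of `ξ`. -/
def Cof {d : ℕ} (ξ : Bd d) : Set (Bd d) := {η | Cofinal ξ η}

theorem self_mem_Cof {d : ℕ} (ξ : Bd d) : ξ ∈ Cof ξ := ⟨0, fun _ _ => rfl⟩
/-- Edge multiplicity in the Schreier graph `Γ_ξ`: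
`mult(u, v) = card {s ∈ S : s · u = v}`. -/
def mult (d m : ℕ) (ω : ℕ → ((Fin m → ZMod d) →+ ZMod d)) (u v : Bd d) : ℕ :=
  Nat.card {f : Bd d → Bd d // f ∈ genSet d m ω ∧ f u = v}
/-- `φ` is an isomorphism of rooted, undirected, unlabeled graphs `(Γ_ξ, ξ) → (Γ_η, η)`:
a bijection `Cof(ξ) → Cof(η)` sending `ξ` to `η` and preserving edge multiplicities. -/
def IsRootedIso (d m : ℕ) (ω : ℕ → ((Fin m → ZMod d) →+ ZMod d)) (ξ η : Bd d)
    (φ : ↥(Cof ξ) ≃ ↥(Cof η)) : Prop :=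
  φ ⟨ξ, self_mem_Cof ξ⟩ = ⟨η, self_mem_Cof η⟩ ∧
  ∀ u v : ↥(Cof ξ), mult d m ω ↑u ↑v = mult d m ω ↑(φ u) ↑(φ v)
/-- `ξ` has at least `r` consecutive letters `d-1` immediately before position `p`
(i.e. the block of `ξ` preceding position `p` ends in `(d-1)^r`). -/
def EndsIn (d : ℕ) (ξ : Bd d) (p r : ℕ) : Prop :=
  r ≤ p ∧ ∀ i, p - r ≤ i → i < p → ξ i = (d : ZMod d) - 1

/-- Compatibility `ξ ∼ η`: zeros at exactly the same positions, and before each zero the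
maximal runs of the letter `d-1` have the same length (equivalently, the corresponding
finite blocks end in `(d-1)^r` for exactly the same `r`'s). -/
def Compatible (d : ℕ) (ξ η : Bd d) : Prop :=
  (∀ n, ξ n = 0 ↔ η n = 0) ∧
  ∀ p, ξ p = 0 → ∀ r, (EndsIn d ξ p r ↔ EndsIn d η p r)

namespace SpinalProof

variable {d m : ℕ} {ω : ℕ → ((Fin m → ZMod d) →+ ZMod d)}

/-! ### basic facts about `ZMod d` -/

lemma dsub_eq : ((d : ZMod d) - 1) = -1 := by rw [ZMod.natCast_self, zero_sub]

lemma natCast_eq_zero_iff (hd : 3 ≤ d) (a : ℕ) : ((a : ZMod d) = 0) ↔ d ∣ a := by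
  haveI : NeZero d := ⟨by omega⟩
  exact ZMod.natCast_eq_zero_iff a d

lemma one_ne_zero' (hd : 3 ≤ d) : (1 : ZMod d) ≠ 0 := by
  have h1 := natCast_eq_zero_iff hd 1
  simp only [Nat.cast_one] at h1
  intro h
  have := Nat.le_of_dvd one_pos (h1.mp h)
  omega

lemma dsub_ne_zero (hd : 3 ≤ d) : ((d : ZMod d) - 1) ≠ 0 := by
  rw [dsub_eq]
  intro h
  have h1 : (1 : ZMod d) = 0 := by linear_combination -h
  exact one_ne_zero' hd h1

lemma one_ne_dsub (hd : 3 ≤ d) : (1 : ZMod d) ≠ (d : ZMod d) - 1 := by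
  rw [dsub_eq]
  intro h
  have h2 : ((2 : ℕ) : ZMod d) = 0 := by push_cast; linear_combination h
  have := Nat.le_of_dvd (by norm_num) ((natCast_eq_zero_iff hd 2).mp h2)
  omega

/-! ### spinal patterns -/

def spinal (d : ℕ) (u : Bd d) (r : ℕ) : Prop :=
  (∀ i, i < r → u i = (d : ZMod d) - 1) ∧ u r = 0

def Spinal (d : ℕ) (u : Bd d) : Prop := ∃ r, spinal d u r

lemma spinal_unique (hd : 3 ≤ d) {u : Bd d} {r r' : ℕ}
    (h : spinal d u r) (h' : spinal d u r') : r = r' := by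
  by_contra hne
  rcases Nat.lt_or_ge r r' with hlt | hge
  · exact dsub_ne_zero hd (by rw [← h'.1 r hlt]; exact h.2)
  · have hlt : r' < r := by omega
    exact dsub_ne_zero hd (by rw [← h.1 r' hlt]; exact h'.2)

/-! ### the action of the generators -/

lemma aMap_iterate (u : Bd d) (k : ℕ) :
    (aMap d)^[k] u = Function.update u 0 (u 0 + k) := by
  induction k with
  | zero => simp [Function.update_eq_self]
  | succ k ih =>
    rw [Function.iterate_succ_apply', ih]
    funext n
    rcases eq_or_ne n 0 with rfl | hn
    · simp [aMap, Function.update_self]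
      push_cast; ring
    · simp [aMap, hn, Function.update_of_ne hn]

lemma bMap_cond_iff (hd : 3 ≤ d) {u : Bd d} {r : ℕ} (h : spinal d u r) (n : ℕ) :
    (n ≠ 0 ∧ (∀ i, i < n - 1 → u i = (d : ZMod d) - 1) ∧ u (n - 1) = 0) ↔ n = r + 1 := by
  constructor
  · rintro ⟨hn0, hrun, hz⟩
    rcases Nat.exists_eq_succ_of_ne_zero hn0 with ⟨t, rfl⟩
    simp only [Nat.succ_sub_one] at hrun hz
    rcases lt_trichotomy t r with hlt | rfl | hgt
    · exact absurd (h.1 t hlt ▸ hz) (dsub_ne_zero hd)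
    · rfl
    · exact absurd ((hrun r hgt).symm.trans h.2) (dsub_ne_zero hd)
  · rintro rfl
    exact ⟨by simp, fun i hi => h.1 i (by omega), by simpa using h.2⟩

lemma bMap_spinal (hd : 3 ≤ d) {u : Bd d} {r : ℕ} (h : spinal d u r) (b : Fin m → ZMod d) :
    bMap d m ω b u = Function.update u (r + 1) (u (r + 1) + ω r b) := by
  funext n
  rw [bMap]
  rcases eq_or_ne n (r + 1) with rfl | hn
  · rw [if_pos ((bMap_cond_iff hd h _).mpr rfl)]
    simp [Function.update_self]
  · rw [if_neg (fun hc => hn ((bMap_cond_iff hd h n).mp hc)), Function.update_of_ne hn]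

lemma bMap_nonspinal (hd : 3 ≤ d) {u : Bd d} (h : ¬ Spinal d u) (b : Fin m → ZMod d) :
    bMap d m ω b u = u := by
  funext n
  rw [bMap, if_neg]
  rintro ⟨hn0, hrun, hz⟩
  exact h ⟨n - 1, fun i hi => hrun i hi, hz⟩

/-! ### counting -/


lemma card_ne_subtype {α : Type} [Finite α] (P : α → Prop) (z : α) (hz : P z) :
    Nat.card {x : α // x ≠ z ∧ P x} = Nat.card {x : α // P x} - 1 := by
  have h1 : Nat.card {x : α // x ≠ z ∧ P x} = ({x | P x} \ {z} : Set α).ncard := by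
    rw [← Nat.card_coe_set_eq]
    exact Nat.card_congr (Equiv.subtypeEquiv (Equiv.refl _) (fun a => by
      simp [Set.mem_diff, and_comm]))
  have h2 : Nat.card {x : α // P x} = ({x | P x} : Set α).ncard := by
    rw [← Nat.card_coe_set_eq]; rfl
  rw [h1, h2]
  exact Set.ncard_diff_singleton_of_mem hz

lemma card_ne_pos {α : Type} [Finite α] (P : α → Prop) (z : α) (hz : P z) :
    0 < Nat.card {x : α // P x} := by
  haveI : Nonempty {x : α // P x} := ⟨⟨z, hz⟩⟩
  exact Nat.card_pos

lemma card_fiber (hω : InOmega d m ω) (r : ℕ) (c : ZMod d) :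
    Nat.card {b : Fin m → ZMod d // ω r b = c} = Nat.card {b : Fin m → ZMod d // ω r b = 0} := by
  obtain ⟨b₀, hb₀⟩ := hω.1 r c
  exact Nat.card_congr
    ⟨fun x => ⟨x.1 - b₀, by simp [map_sub, x.2, hb₀]⟩,
     fun y => ⟨y.1 + b₀, by simp [map_add, y.2, hb₀]⟩,
     fun x => by simp, fun y => by simp⟩

lemma card_ker_mul (hd : 3 ≤ d) (hω : InOmega d m ω) (r : ℕ) :
    d * Nat.card {b : Fin m → ZMod d // ω r b = 0} = Nat.card (Fin m → ZMod d) := by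
  haveI : NeZero d := ⟨by omega⟩
  have h1 : Nat.card (Fin m → ZMod d) =
      Nat.card ((Fin m → ZMod d) ⧸ (ω r).ker) * Nat.card (ω r).ker :=
    AddSubgroup.card_eq_card_quotient_mul_card_addSubgroup _
  have h2 : Nat.card ((Fin m → ZMod d) ⧸ (ω r).ker) = d := by
    rw [Nat.card_congr (QuotientAddGroup.quotientKerEquivOfSurjective (ω r) (hω.1 r)).toEquiv]
    exact Nat.card_zmod d
  have h3 : Nat.card (ω r).ker = Nat.card {b : Fin m → ZMod d // ω r b = 0} :=
    Nat.card_congr (Equiv.subtypeEquiv (Equiv.refl _) (fun b => AddMonoidHom.mem_ker))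
  rw [h1, h2, h3]

/-- the cardinality of each kernel -/
def Kc (d m : ℕ) (ω : ℕ → ((Fin m → ZMod d) →+ ZMod d)) : ℕ :=
  Nat.card {b : Fin m → ZMod d // ω 0 b = 0}

/-- the cardinality of `B` -/
def NB (d m : ℕ) : ℕ := Nat.card (Fin m → ZMod d)

lemma card_ker_eq (hd : 3 ≤ d) (hω : InOmega d m ω) (r : ℕ) :
    Nat.card {b : Fin m → ZMod d // ω r b = 0} = Kc d m ω := by
  have h1 := card_ker_mul hd hω r
  have h2 := card_ker_mul hd hω 0
  rw [Kc]
  have h3 := h1.trans h2.symm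
  exact Nat.eq_of_mul_eq_mul_left (by omega) h3

lemma NB_eq (hd : 3 ≤ d) (hω : InOmega d m ω) : NB d m = d * Kc d m ω :=
  (card_ker_mul hd hω 0).symm

lemma Kc_pos (hd : 3 ≤ d) : 0 < Kc d m ω := by
  haveI : NeZero d := ⟨by omega⟩
  exact card_ne_pos _ 0 (map_zero _)

lemma Kc_lt_NB (hd : 3 ≤ d) (hω : InOmega d m ω) : Kc d m ω < NB d m := by
  have h1 := NB_eq hd hω
  have h2 := Kc_pos (m := m) (ω := ω) hd
  nlinarith

lemma card_fiber_ne (hd : 3 ≤ d) (hω : InOmega d m ω) (r : ℕ) {c : ZMod d} (hc : c ≠ 0) :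
    Nat.card {b : Fin m → ZMod d // b ≠ 0 ∧ ω r b = c} = Kc d m ω := by
  have e : {b : Fin m → ZMod d // b ≠ 0 ∧ ω r b = c} ≃ {b : Fin m → ZMod d // ω r b = c} :=
    Equiv.subtypeEquiv (Equiv.refl _) (fun b => by
      simp only [Equiv.refl_apply]
      constructor
      · exact fun h => h.2
      · intro h
        refine ⟨fun h0 => ?_, h⟩
        rw [h0, map_zero] at h
        exact hc h.symm)
  rw [Nat.card_congr e, card_fiber hω r c, card_ker_eq hd hω r]

lemma card_fiber_zero (hd : 3 ≤ d) (hω : InOmega d m ω) (r : ℕ) :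
    Nat.card {b : Fin m → ZMod d // b ≠ 0 ∧ ω r b = 0} = Kc d m ω - 1 := by
  haveI : NeZero d := ⟨by omega⟩
  have h := card_ne_subtype (fun b : Fin m → ZMod d => ω r b = 0) 0 (map_zero _)
  rw [card_ker_eq hd hω r] at h
  exact h

lemma card_Bne (hd : 3 ≤ d) :
    Nat.card {b : Fin m → ZMod d // b ≠ 0} = NB d m - 1 := by
  haveI : NeZero d := ⟨by omega⟩
  have h := card_ne_subtype (fun _ : Fin m → ZMod d => True) 0 trivial
  have e : {b : Fin m → ZMod d // b ≠ 0 ∧ True} ≃ {b : Fin m → ZMod d // b ≠ 0} :=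
    Equiv.subtypeEquiv (Equiv.refl _) (by simp)
  have e2 : {b : Fin m → ZMod d // True} ≃ (Fin m → ZMod d) :=
    Equiv.subtypeUnivEquiv (by simp)
  rw [Nat.card_congr e.symm, h, Nat.card_congr e2]
  rfl


/-! ### enumeration of the generating set -/

def spinalPoint (d : ℕ) (r : ℕ) : Bd d := fun n => if n = r then 0 else (d : ZMod d) - 1

lemma spinalPoint_spinal (r : ℕ) : spinal d (spinalPoint d r) r :=
  ⟨fun i hi => by simp [spinalPoint, Nat.ne_of_lt hi], by simp [spinalPoint]⟩

lemma ones_nonspinal (hd : 3 ≤ d) : ¬ Spinal d (fun _ => (1 : ZMod d)) := by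
  rintro ⟨r, -, hz⟩
  exact one_ne_zero' hd hz

def Fenum (d m : ℕ) (ω : ℕ → ((Fin m → ZMod d) →+ ZMod d)) :
    (Fin (d - 1) ⊕ {b : Fin m → ZMod d // b ≠ 0}) → (Bd d → Bd d)
  | Sum.inl j => (aMap d)^[(j : ℕ) + 1]
  | Sum.inr b => bMap d m ω b.1

lemma natCast_inj_of_lt (hd : 3 ≤ d) {a b : ℕ} (ha : a < d) (hb : b < d)
    (h : (a : ZMod d) = b) : a = b := by
  haveI : NeZero d := ⟨by omega⟩
  rw [← ZMod.val_cast_of_lt ha, ← ZMod.val_cast_of_lt hb, h]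

lemma Fenum_inj (hd : 3 ≤ d) (hω : InOmega d m ω) : Function.Injective (Fenum d m ω) := by
  haveI : NeZero d := ⟨by omega⟩
  rintro (j | b) (j' | b') h
  · have hj := j.2
    have hj' := j'.2
    have h0 := congrFun (congrFun h (fun _ => (0 : ZMod d))) 0
    simp only [Fenum, aMap_iterate, Function.update_self] at h0
    have hc : (((j : ℕ) + 1 : ℕ) : ZMod d) = (((j' : ℕ) + 1 : ℕ) : ZMod d) := by
      push_cast at h0 ⊢
      linear_combination h0
    have := natCast_inj_of_lt hd (by omega) (by omega) hc
    congr 1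
    exact Fin.ext (by omega)
  · exfalso
    have hj := j.2
    have h0 := congrFun (congrFun h (fun _ => (1 : ZMod d))) 0
    simp only [Fenum, aMap_iterate, Function.update_self,
      bMap_nonspinal hd (ones_nonspinal hd)] at h0
    have hz : (((j : ℕ) + 1 : ℕ) : ZMod d) = ((0 : ℕ) : ZMod d) := by
      push_cast at h0 ⊢
      linear_combination h0
    have := natCast_inj_of_lt hd (by omega) (by omega) hz
    omega
  · exfalso
    have hj := j'.2
    have h0 := congrFun (congrFun h.symm (fun _ => (1 : ZMod d))) 0
    simp only [Fenum, aMap_iterate, Function.update_self,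
      bMap_nonspinal hd (ones_nonspinal hd)] at h0
    have hz : (((j' : ℕ) + 1 : ℕ) : ZMod d) = ((0 : ℕ) : ZMod d) := by
      push_cast at h0 ⊢
      linear_combination h0
    have := natCast_inj_of_lt hd (by omega) (by omega) hz
    omega
  · have hall : ∀ r, ω r b.1 = ω r b'.1 := by
      intro r
      have h0 := congrFun (congrFun h (spinalPoint d r)) (r + 1)
      simp only [Fenum, bMap_spinal hd (spinalPoint_spinal r), Function.update_self] at h0
      exact add_left_cancel h0
    have hsub : b.1 - b'.1 = 0 := hω.2 0 _ (fun j _ => by rw [map_sub, hall j, sub_self])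
    exact congrArg Sum.inr (Subtype.ext (sub_eq_zero.mp hsub))

lemma Fenum_mem (x : Fin (d - 1) ⊕ {b : Fin m → ZMod d // b ≠ 0}) :
    Fenum d m ω x ∈ genSet d m ω := by
  rcases x with j | b
  · exact Or.inl ⟨(j : ℕ) + 1, by omega, by have := j.2; omega, rfl⟩
  · exact Or.inr ⟨b.1, b.2, rfl⟩

lemma genSet_sub (hd : 3 ≤ d) {f : Bd d → Bd d} (hf : f ∈ genSet d m ω) :
    ∃ x, Fenum d m ω x = f := by
  rcases hf with ⟨j, h1, h2, rfl⟩ | ⟨b, hb, rfl⟩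
  · refine ⟨Sum.inl ⟨j - 1, by omega⟩, ?_⟩
    show (aMap d)^[j - 1 + 1] = (aMap d)^[j]
    rw [show j - 1 + 1 = j by omega]
  · exact ⟨Sum.inr ⟨b, hb⟩, rfl⟩

/-! ### computing `mult` -/

def DiffAt (u v : Bd d) (k : ℕ) : Prop := v k ≠ u k ∧ ∀ n, n ≠ k → v n = u n

lemma diffAt_update {u v : Bd d} {k : ℕ} (h : DiffAt u v k) :
    v = Function.update u k (v k) := by
  funext n
  rcases eq_or_ne n k with rfl | hn
  · simp
  · rw [Function.update_of_ne hn]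
    exact h.2 n hn

lemma mult_eq_split (hd : 3 ≤ d) (hω : InOmega d m ω) (u v : Bd d) :
    mult d m ω u v = Nat.card {j : Fin (d - 1) // (aMap d)^[(j : ℕ) + 1] u = v}
      + Nat.card {b : Fin m → ZMod d // b ≠ 0 ∧ bMap d m ω b u = v} := by
  haveI : NeZero d := ⟨by omega⟩
  have e1 : {x : Fin (d - 1) ⊕ {b : Fin m → ZMod d // b ≠ 0} // Fenum d m ω x u = v}
      ≃ {f : Bd d → Bd d // f ∈ genSet d m ω ∧ f u = v} := by
    refine Equiv.ofBijective (fun x => ⟨Fenum d m ω x.1, Fenum_mem x.1, x.2⟩) ⟨?_, ?_⟩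
    · intro x y hxy
      exact Subtype.ext (Fenum_inj hd hω (congrArg Subtype.val hxy))
    · rintro ⟨f, hf, hfu⟩
      obtain ⟨x, hx⟩ := genSet_sub hd hf
      exact ⟨⟨x, by rw [hx]; exact hfu⟩, Subtype.ext hx⟩
  rw [mult, ← Nat.card_congr e1, Nat.card_congr (Equiv.subtypeSum), Nat.card_sum]
  congr 1
  exact Nat.card_congr ((Equiv.subtypeEquiv (Equiv.refl _) (fun b => Iff.rfl)).trans
    (Equiv.subtypeSubtypeEquivSubtypeInter (fun b : Fin m → ZMod d => b ≠ 0)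
      (fun b => bMap d m ω b u = v)))

lemma natCast_add_one_ne_zero (hd : 3 ≤ d) (j : Fin (d - 1)) :
    (((j : ℕ) + 1 : ℕ) : ZMod d) ≠ 0 := by
  haveI : NeZero d := ⟨by omega⟩
  intro h
  have hj := j.2
  have := natCast_inj_of_lt hd (show (j : ℕ) + 1 < d by omega) (show 0 < d by omega)
    (by rw [h]; simp)
  omega

lemma acard_diff0 (hd : 3 ≤ d) {u v : Bd d} (h : DiffAt u v 0) :
    Nat.card {j : Fin (d - 1) // (aMap d)^[(j : ℕ) + 1] u = v} = 1 := by
  haveI : NeZero d := ⟨by omega⟩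
  have hne : v 0 - u 0 ≠ 0 := sub_ne_zero.mpr h.1
  have hval1 : 1 ≤ (v 0 - u 0).val := by
    rcases Nat.eq_zero_or_pos (v 0 - u 0).val with h0 | h0
    · exact absurd ((ZMod.val_eq_zero _).mp h0) hne
    · omega
  have hvald : (v 0 - u 0).val < d := ZMod.val_lt _
  have hcast : (((v 0 - u 0).val : ℕ) : ZMod d) = v 0 - u 0 := by
    rw [ZMod.natCast_val, ZMod.cast_id]
  haveI hne' : Nonempty {j : Fin (d - 1) // (aMap d)^[(j : ℕ) + 1] u = v} := by
    refine ⟨⟨⟨(v 0 - u 0).val - 1, by omega⟩, ?_⟩⟩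
    rw [aMap_iterate]
    show Function.update u 0 (u 0 + (((v 0 - u 0).val - 1 + 1 : ℕ) : ZMod d)) = v
    rw [show (v 0 - u 0).val - 1 + 1 = (v 0 - u 0).val by omega, hcast]
    funext n
    rcases eq_or_ne n 0 with rfl | hn
    · rw [Function.update_self]
      ring
    · rw [Function.update_of_ne hn]
      exact (h.2 n hn).symm
  haveI hsub : Subsingleton {j : Fin (d - 1) // (aMap d)^[(j : ℕ) + 1] u = v} := by
    constructor
    rintro ⟨j, hj⟩ ⟨j', hj'⟩
    have e0 := congrFun (hj.trans hj'.symm) 0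
    simp only [aMap_iterate, Function.update_self] at e0
    have hcc : (((j : ℕ) + 1 : ℕ) : ZMod d) = (((j' : ℕ) + 1 : ℕ) : ZMod d) := by
      push_cast at e0 ⊢
      linear_combination e0
    have hj2 := j.2
    have hj2' := j'.2
    have hval := natCast_inj_of_lt hd (by omega) (by omega) hcc
    have : (j : ℕ) = (j' : ℕ) := by omega
    exact Subtype.ext (Fin.ext this)
  exact Nat.card_unique

lemma acard_zero (hd : 3 ≤ d) {u v : Bd d} (h : ¬ DiffAt u v 0) :
    Nat.card {j : Fin (d - 1) // (aMap d)^[(j : ℕ) + 1] u = v} = 0 := by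
  rw [Nat.card_eq_zero]
  left
  constructor
  rintro ⟨j, hj⟩
  apply h
  rw [aMap_iterate] at hj
  constructor
  · rw [← hj, Function.update_self]
    intro hcontra
    have : (((j : ℕ) + 1 : ℕ) : ZMod d) = 0 := by linear_combination hcontra
    exact natCast_add_one_ne_zero hd j this
  · intro n hn
    rw [← hj, Function.update_of_ne hn]

lemma bcard_nonspinal_self (hd : 3 ≤ d) (h : ¬ Spinal d u) :
    Nat.card {b : Fin m → ZMod d // b ≠ 0 ∧ bMap d m ω b u = u} = NB d m - 1 := by
  have e : {b : Fin m → ZMod d // b ≠ 0 ∧ bMap d m ω b u = u}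
      ≃ {b : Fin m → ZMod d // b ≠ 0} :=
    Equiv.subtypeEquiv (Equiv.refl _)
      (fun b => by simp [bMap_nonspinal hd h])
  rw [Nat.card_congr e, card_Bne hd]

lemma bcard_nonspinal_ne (hd : 3 ≤ d) (h : ¬ Spinal d u) (hne : v ≠ u) :
    Nat.card {b : Fin m → ZMod d // b ≠ 0 ∧ bMap d m ω b u = v} = 0 := by
  rw [Nat.card_eq_zero]
  left
  exact ⟨fun ⟨b, hb⟩ => hne ((bMap_nonspinal hd h b ▸ hb.2).symm ▸ rfl)⟩

lemma bcard_spinal_self (hd : 3 ≤ d) (hω : InOmega d m ω) {r : ℕ} (h : spinal d u r) :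
    Nat.card {b : Fin m → ZMod d // b ≠ 0 ∧ bMap d m ω b u = u} = Kc d m ω - 1 := by
  have e : {b : Fin m → ZMod d // b ≠ 0 ∧ bMap d m ω b u = u}
      ≃ {b : Fin m → ZMod d // b ≠ 0 ∧ ω r b = 0} := by
    refine Equiv.subtypeEquiv (Equiv.refl _) (fun b => ?_)
    simp only [Equiv.refl_apply]
    rw [bMap_spinal hd h, Function.update_eq_self_iff]
    constructor
    · rintro ⟨hb, he⟩
      exact ⟨hb, by linear_combination he⟩
    · rintro ⟨hb, he⟩
      exact ⟨hb, by rw [he, add_zero]⟩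
  rw [Nat.card_congr e, card_fiber_zero hd hω r]

lemma bcard_spinal_diff (hd : 3 ≤ d) (hω : InOmega d m ω) {r : ℕ} (h : spinal d u r)
    (hv : DiffAt u v (r + 1)) :
    Nat.card {b : Fin m → ZMod d // b ≠ 0 ∧ bMap d m ω b u = v} = Kc d m ω := by
  have hc : v (r + 1) - u (r + 1) ≠ 0 := sub_ne_zero.mpr hv.1
  have e : {b : Fin m → ZMod d // b ≠ 0 ∧ bMap d m ω b u = v}
      ≃ {b : Fin m → ZMod d // b ≠ 0 ∧ ω r b = v (r + 1) - u (r + 1)} := by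
    refine Equiv.subtypeEquiv (Equiv.refl _) (fun b => ?_)
    simp only [Equiv.refl_apply]
    rw [bMap_spinal hd h]
    constructor
    · rintro ⟨hb, he⟩
      refine ⟨hb, ?_⟩
      have := congrFun he (r + 1)
      rw [Function.update_self] at this
      linear_combination this
    · rintro ⟨hb, he⟩
      refine ⟨hb, ?_⟩
      rw [diffAt_update hv]
      congr 1
      rw [he]
      ring
  rw [Nat.card_congr e, card_fiber_ne hd hω r hc]

lemma bcard_spinal_other (hd : 3 ≤ d) {r : ℕ} (h : spinal d u r)
    (hne : v ≠ u) (hnd : ¬ DiffAt u v (r + 1)) :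
    Nat.card {b : Fin m → ZMod d // b ≠ 0 ∧ bMap d m ω b u = v} = 0 := by
  rw [Nat.card_eq_zero]
  left
  constructor
  rintro ⟨b, hb, he⟩
  rw [bMap_spinal hd h] at he
  apply hnd
  constructor
  · intro hcontra
    apply hne
    rw [← he]
    rw [← he, Function.update_self] at hcontra
    rw [show ω r b = 0 by linear_combination hcontra, add_zero, Function.update_eq_self]
  · intro n hn
    rw [← he, Function.update_of_ne hn]

/-! ### the values of `mult` -/

lemma mult_self_spinal (hd : 3 ≤ d) (hω : InOmega d m ω) {r : ℕ} (h : spinal d u r) :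
    mult d m ω u u = Kc d m ω - 1 := by
  rw [mult_eq_split hd hω, acard_zero hd (fun hc => hc.1 rfl), bcard_spinal_self hd hω h,
    zero_add]

lemma mult_self_nonspinal (hd : 3 ≤ d) (hω : InOmega d m ω) (h : ¬ Spinal d u) :
    mult d m ω u u = NB d m - 1 := by
  rw [mult_eq_split hd hω, acard_zero hd (fun hc => hc.1 rfl), bcard_nonspinal_self hd h,
    zero_add]

lemma mult_diff0 (hd : 3 ≤ d) (hω : InOmega d m ω) {u v : Bd d} (h : DiffAt u v 0) :
    mult d m ω u v = 1 := by
  have hne : v ≠ u := fun hc => h.1 (by rw [hc])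
  rw [mult_eq_split hd hω, acard_diff0 hd h]
  rcases Classical.em (Spinal d u) with ⟨r, hr⟩ | hs
  · have hnd : ¬ DiffAt u v (r + 1) := fun hc => hc.1 (h.2 (r + 1) (Nat.succ_ne_zero r))
    rw [bcard_spinal_other hd hr hne hnd]
  · rw [bcard_nonspinal_ne hd hs hne]

lemma mult_spe (hd : 3 ≤ d) (hω : InOmega d m ω) {u v : Bd d} {r : ℕ}
    (h : spinal d u r) (hv : DiffAt u v (r + 1)) :
    mult d m ω u v = Kc d m ω := by
  have h0 : ¬ DiffAt u v 0 := fun hc => hc.1 (hv.2 0 (by omega))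
  rw [mult_eq_split hd hω, acard_zero hd h0, bcard_spinal_diff hd hω h hv, zero_add]

lemma mult_none (hd : 3 ≤ d) (hω : InOmega d m ω) {u v : Bd d}
    (hne : v ≠ u) (h0 : ¬ DiffAt u v 0)
    (hs : ∀ r, spinal d u r → ¬ DiffAt u v (r + 1)) :
    mult d m ω u v = 0 := by
  rw [mult_eq_split hd hω, acard_zero hd h0]
  rcases Classical.em (Spinal d u) with ⟨r, hr⟩ | hsp
  · rw [bcard_spinal_other hd hr hne (hs r hr)]
  · rw [bcard_nonspinal_ne hd hsp hne]

lemma mult_cases (hd : 3 ≤ d) (hω : InOmega d m ω) {u v : Bd d}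
    (h : mult d m ω u v ≠ 0) :
    v = u ∨ DiffAt u v 0 ∨ ∃ r, spinal d u r ∧ DiffAt u v (r + 1) := by
  by_contra hc
  push_neg at hc
  exact h (mult_none hd hω hc.1 hc.2.1 (fun r hr => hc.2.2 r hr))

/-! ### the map `T` realizing the isomorphism, given compatibility -/

def cRun (d : ℕ) (u : Bd d) (n : ℕ) : Prop :=
  ∃ p, n < p ∧ u p = 0 ∧ ∀ i, n < i → i < p → u i = (d : ZMod d) - 1

lemma cRun_congr {u w : Bd d} {n : ℕ} (h : ∀ i, n < i → u i = w i) :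
    cRun d u n ↔ cRun d w n := by
  constructor
  · rintro ⟨p, hp, hz, hr⟩
    exact ⟨p, hp, h p hp ▸ hz, fun i h1 h2 => h i h1 ▸ hr i h1 h2⟩
  · rintro ⟨p, hp, hz, hr⟩
    exact ⟨p, hp, (h p hp).symm ▸ hz, fun i h1 h2 => (h i h1).symm ▸ hr i h1 h2⟩

open scoped Classical in
def Tmap (d : ℕ) (ξ η : Bd d) (u : Bd d) : Bd d := fun n =>
  if cRun d u n ↔ cRun d ξ n then Equiv.swap (ξ n) (η n) (u n) else u n

section Tsection

variable {ξ η : Bd d} (hc : Compatible d ξ η)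

open scoped Classical

lemma swap_swap (a b x : ZMod d) : Equiv.swap a b (Equiv.swap a b x) = x := by
  rw [← Equiv.symm_swap]
  exact (Equiv.swap a b).symm_apply_apply x

include hc

lemma compat_cRun (n : ℕ) : cRun d ξ n ↔ cRun d η n := by
  have main : ∀ (α β : Bd d), Compatible d α β → cRun d α n → cRun d β n := by
    rintro α β hcc ⟨p, hp, hz, hr⟩
    have he : EndsIn d α p (p - n - 1) :=
      ⟨by omega, fun i h1 h2 => hr i (by omega) h2⟩
    have he' : EndsIn d β p (p - n - 1) := (hcc.2 p hz _).mp he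
    exact ⟨p, hp, (hcc.1 p).mp hz, fun i h1 h2 => he'.2 i (by omega) h2⟩
  have hsymm : Compatible d η ξ :=
    ⟨fun k => (hc.1 k).symm, fun p hp r => (hc.2 p ((hc.1 p).mpr hp) r).symm⟩
  exact ⟨main ξ η hc, main η ξ hsymm⟩

lemma compat_dsub {n : ℕ} (hcr : cRun d ξ n) :
    (ξ n = (d : ZMod d) - 1) ↔ (η n = (d : ZMod d) - 1) := by
  constructor
  · intro hξ
    obtain ⟨p, hp, hz, hr⟩ := hcr
    have he : EndsIn d ξ p (p - n) := ⟨by omega, fun i h1 h2 => by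
      rcases eq_or_ne i n with rfl | hi
      · exact hξ
      · exact hr i (by omega) h2⟩
    have he' := (hc.2 p hz _).mp he
    exact he'.2 n (by omega) hp
  · intro hη
    obtain ⟨p, hp, hz, hr⟩ := (compat_cRun hc n).mp hcr
    have he : EndsIn d η p (p - n) := ⟨by omega, fun i h1 h2 => by
      rcases eq_or_ne i n with rfl | hi
      · exact hη
      · exact hr i (by omega) h2⟩
    have hzξ : ξ p = 0 := (hc.1 p).mpr hz
    have he' := (hc.2 p hzξ _).mpr he
    exact he'.2 n (by omega) hp

lemma swap_zero (n : ℕ) : Equiv.swap (ξ n) (η n) 0 = 0 := by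
  rcases eq_or_ne (ξ n) 0 with h0 | h0
  · have h1 : η n = 0 := (hc.1 n).mp h0
    rw [h0, h1, Equiv.swap_self, Equiv.refl_apply]
  · have h1 : η n ≠ 0 := fun hcst => h0 ((hc.1 n).mpr hcst)
    exact Equiv.swap_apply_of_ne_of_ne (fun hco => h0 hco.symm) (fun hco => h1 hco.symm)

lemma swap_dsub {n : ℕ} (hcr : cRun d ξ n) :
    Equiv.swap (ξ n) (η n) ((d : ZMod d) - 1) = (d : ZMod d) - 1 := by
  rcases eq_or_ne (ξ n) ((d : ZMod d) - 1) with h0 | h0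
  · have h1 : η n = (d : ZMod d) - 1 := (compat_dsub hc hcr).mp h0
    rw [h0, h1, Equiv.swap_self, Equiv.refl_apply]
  · have h1 : η n ≠ (d : ZMod d) - 1 := fun hcst => h0 ((compat_dsub hc hcr).mpr hcst)
    exact Equiv.swap_apply_of_ne_of_ne (fun hco => h0 hco.symm) (fun hco => h1 hco.symm)

lemma Tmap_zero_iff (u : Bd d) (n : ℕ) : Tmap d ξ η u n = 0 ↔ u n = 0 := by
  rw [Tmap]
  split_ifs with hb
  · constructor
    · intro h
      have h2 := congrArg (Equiv.swap (ξ n) (η n)) h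
      rw [swap_swap, swap_zero hc n] at h2
      exact h2
    · intro h
      rw [h, swap_zero hc n]
  · exact Iff.rfl

lemma Tmap_dsub_iff {u : Bd d} {n : ℕ} (hcr : cRun d u n) :
    Tmap d ξ η u n = (d : ZMod d) - 1 ↔ u n = (d : ZMod d) - 1 := by
  rw [Tmap]
  split_ifs with hb
  · constructor
    · intro h
      have h2 := congrArg (Equiv.swap (ξ n) (η n)) h
      rw [swap_swap, swap_dsub hc (hb.mp hcr)] at h2
      exact h2
    · intro h
      rw [h, swap_dsub hc (hb.mp hcr)]
  · exact Iff.rfl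

lemma Tmap_cRun (u : Bd d) (n : ℕ) : cRun d (Tmap d ξ η u) n ↔ cRun d u n := by
  constructor
  · rintro ⟨p, hp, hz, hr⟩
    have hz' : u p = 0 := (Tmap_zero_iff hc u p).mp hz
    have aux : ∀ k i, n < i → i < p → p - i ≤ k → u i = (d : ZMod d) - 1 := by
      intro k
      induction k with
      | zero => intro i h1 h2 h3; omega
      | succ k ih =>
        intro i h1 h2 h3
        have hcru : cRun d u i := ⟨p, h2, hz', fun i' h1' h2' => ih i' (by omega) h2' (by omega)⟩
        exact (Tmap_dsub_iff hc hcru).mp (hr i h1 h2)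
    exact ⟨p, hp, hz', fun i h1 h2 => aux (p - i) i h1 h2 le_rfl⟩
  · rintro ⟨p, hp, hz, hr⟩
    refine ⟨p, hp, (Tmap_zero_iff hc u p).mpr hz, fun i h1 h2 => ?_⟩
    have hcru : cRun d u i := ⟨p, h2, hz, fun i' h1' h2' => hr i' (by omega) h2'⟩
    exact (Tmap_dsub_iff hc hcru).mpr (hr i h1 h2)

lemma Tmap_invol (u : Bd d) : Tmap d ξ η (Tmap d ξ η u) = u := by
  funext n
  by_cases hb : cRun d u n ↔ cRun d ξ n
  · have hb' : cRun d (Tmap d ξ η u) n ↔ cRun d ξ n := (Tmap_cRun hc u n).trans hb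
    show (if cRun d (Tmap d ξ η u) n ↔ cRun d ξ n then _ else _) = u n
    rw [if_pos hb']
    show Equiv.swap (ξ n) (η n) (Tmap d ξ η u n) = u n
    have : Tmap d ξ η u n = Equiv.swap (ξ n) (η n) (u n) := by
      show (if cRun d u n ↔ cRun d ξ n then _ else _) = _
      rw [if_pos hb]
    rw [this, swap_swap]
  · have hb' : ¬ (cRun d (Tmap d ξ η u) n ↔ cRun d ξ n) :=
      fun hcc => hb ((Tmap_cRun hc u n).symm.trans hcc)
    show (if cRun d (Tmap d ξ η u) n ↔ cRun d ξ n then _ else _) = u n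
    rw [if_neg hb']
    show Tmap d ξ η u n = u n
    show (if cRun d u n ↔ cRun d ξ n then _ else _) = u n
    rw [if_neg hb]

lemma Tmap_xi : Tmap d ξ η ξ = η := by
  funext n
  show (if cRun d ξ n ↔ cRun d ξ n then _ else _) = η n
  rw [if_pos Iff.rfl]
  exact Equiv.swap_apply_left _ _

lemma Tmap_cof {u : Bd d} (h : Cofinal ξ u) : Cofinal η (Tmap d ξ η u) := by
  obtain ⟨N, hN⟩ := h
  refine ⟨N, fun n hn => ?_⟩
  have hval : u n = ξ n := (hN n hn).symm
  have hcr : cRun d u n ↔ cRun d ξ n := cRun_congr (fun i hi => (hN i (by omega)).symm)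
  show η n = (if cRun d u n ↔ cRun d ξ n then _ else _)
  rw [if_pos hcr, hval]
  exact (Equiv.swap_apply_left _ _).symm

lemma Tmap_cof' {u : Bd d} (h : Cofinal η u) : Cofinal ξ (Tmap d ξ η u) := by
  obtain ⟨N, hN⟩ := h
  refine ⟨N, fun n hn => ?_⟩
  have hval : u n = η n := (hN n hn).symm
  have hcr : cRun d u n ↔ cRun d ξ n :=
    (cRun_congr (fun i hi => (hN i (by omega)).symm)).trans (compat_cRun hc n).symm
  show ξ n = (if cRun d u n ↔ cRun d ξ n then _ else _)
  rw [if_pos hcr, hval]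
  exact (Equiv.swap_apply_right _ _).symm

lemma Tmap_spinal {u : Bd d} {r : ℕ} (h : spinal d u r) : spinal d (Tmap d ξ η u) r := by
  constructor
  · intro i hi
    have hcru : cRun d u i := ⟨r, hi, h.2, fun j h1 h2 => h.1 j h2⟩
    exact (Tmap_dsub_iff hc hcru).mpr (h.1 i hi)
  · exact (Tmap_zero_iff hc u r).mpr h.2

lemma Tmap_update_ne {u : Bd d} {k : ℕ} {x : ZMod d} (h : x ≠ u k) :
    Tmap d ξ η (Function.update u k x) k ≠ Tmap d ξ η u k := by
  have hcr : cRun d (Function.update u k x) k ↔ cRun d u k :=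
    cRun_congr (fun i hi => Function.update_of_ne (by omega) _ _)
  by_cases hb : cRun d u k ↔ cRun d ξ k
  · have hb' : cRun d (Function.update u k x) k ↔ cRun d ξ k := hcr.trans hb
    show (if cRun d (Function.update u k x) k ↔ cRun d ξ k then _ else _)
      ≠ (if cRun d u k ↔ cRun d ξ k then _ else _)
    rw [if_pos hb', if_pos hb, Function.update_self]
    intro hcontra
    exact h ((Equiv.swap (ξ k) (η k)).injective hcontra)
  · have hb' : ¬(cRun d (Function.update u k x) k ↔ cRun d ξ k) :=
      fun hcc => hb (hcr.symm.trans hcc)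
    show (if cRun d (Function.update u k x) k ↔ cRun d ξ k then _ else _)
      ≠ (if cRun d u k ↔ cRun d ξ k then _ else _)
    rw [if_neg hb', if_neg hb, Function.update_self]
    exact h

lemma Tmap_update_eq {u : Bd d} {k : ℕ} {x : ZMod d}
    (hk : k = 0 ∨ ∃ r, spinal d u r ∧ k = r + 1) {n : ℕ} (hn : n ≠ k) :
    Tmap d ξ η (Function.update u k x) n = Tmap d ξ η u n := by
  have hval : Function.update u k x n = u n := Function.update_of_ne hn _ _
  rcases Nat.lt_or_ge k n with hkn | hkn
  · -- n > k : the branch conditions agree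
    have hcr : cRun d (Function.update u k x) n ↔ cRun d u n :=
      cRun_congr (fun i hi => Function.update_of_ne (by omega) _ _)
    by_cases hb : cRun d u n ↔ cRun d ξ n
    · show (if cRun d (Function.update u k x) n ↔ cRun d ξ n then _ else _) = _
      rw [if_pos (hcr.trans hb), hval]
      show _ = (if cRun d u n ↔ cRun d ξ n then _ else _)
      rw [if_pos hb]
    · show (if cRun d (Function.update u k x) n ↔ cRun d ξ n then _ else _) = _
      rw [if_neg (fun hcc => hb (hcr.symm.trans hcc)), hval]
      show u n = (if cRun d u n ↔ cRun d ξ n then _ else _)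
      rw [if_neg hb]
  · -- n < k : use the spinal structure
    have hnk : n < k := by omega
    rcases hk with rfl | ⟨r, hr, rfl⟩
    · omega
    · -- k = r + 1, u spinal at r
      rcases eq_or_ne n r with rfl | hnr
      · -- u n = 0 : both sides are 0
        have h1 : Tmap d ξ η (Function.update u (n + 1) x) n = 0 := by
          rw [Tmap_zero_iff hc]
          rw [Function.update_of_ne hn]
          exact hr.2
        have h2 : Tmap d ξ η u n = 0 := by
          rw [Tmap_zero_iff hc]
          exact hr.2
        rw [h1, h2]
      · -- n < r : value (d-1), cRun holds on both sides
        have hnr' : n < r := by omega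
        have hcru : cRun d u n := ⟨r, hnr', hr.2, fun j h1 h2 => hr.1 j h2⟩
        have hcru' : cRun d (Function.update u (r + 1) x) n := by
          refine ⟨r, hnr', ?_, fun j h1 h2 => ?_⟩
          · rw [Function.update_of_ne (by omega)]
            exact hr.2
          · rw [Function.update_of_ne (by omega)]
            exact hr.1 j h2
        by_cases hb : cRun d ξ n
        · show (if cRun d (Function.update u (r + 1) x) n ↔ cRun d ξ n then _ else _)
            = (if cRun d u n ↔ cRun d ξ n then _ else _)
          rw [if_pos (iff_of_true hcru' hb), if_pos (iff_of_true hcru hb), hval]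
        · show (if cRun d (Function.update u (r + 1) x) n ↔ cRun d ξ n then _ else _)
            = (if cRun d u n ↔ cRun d ξ n then _ else _)
          rw [if_neg (fun hcc => hb (hcc.mp hcru')), if_neg (fun hcc => hb (hcc.mp hcru)), hval]

lemma Tmap_diffAt {u v : Bd d} {k : ℕ} (h : DiffAt u v k)
    (hk : k = 0 ∨ ∃ r, spinal d u r ∧ k = r + 1) :
    DiffAt (Tmap d ξ η u) (Tmap d ξ η v) k := by
  have hv : v = Function.update u k (v k) := diffAt_update h
  constructor
  · rw [hv]
    exact Tmap_update_ne hc h.1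
  · intro n hn
    rw [hv]
    exact Tmap_update_eq hc hk hn

lemma Tmap_Spinal_iff (u : Bd d) : Spinal d (Tmap d ξ η u) ↔ Spinal d u := by
  constructor
  · rintro ⟨r, hr⟩
    have h2 := Tmap_spinal hc hr
    rw [Tmap_invol hc] at h2
    exact ⟨r, h2⟩
  · rintro ⟨r, hr⟩
    exact ⟨r, Tmap_spinal hc hr⟩

lemma mult_Tmap (hd : 3 ≤ d) (hω : InOmega d m ω) (u v : Bd d) :
    mult d m ω (Tmap d ξ η u) (Tmap d ξ η v) = mult d m ω u v := by
  rcases eq_or_ne v u with rfl | hne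
  · rcases Classical.em (Spinal d v) with ⟨r, hr⟩ | hs
    · rw [mult_self_spinal hd hω hr, mult_self_spinal hd hω (Tmap_spinal hc hr)]
    · rw [mult_self_nonspinal hd hω hs,
        mult_self_nonspinal hd hω (fun hcc => hs ((Tmap_Spinal_iff hc v).mp hcc))]
  rcases Classical.em (DiffAt u v 0) with h0 | h0
  · rw [mult_diff0 hd hω h0, mult_diff0 hd hω (Tmap_diffAt hc h0 (Or.inl rfl))]
  rcases Classical.em (∃ r, spinal d u r ∧ DiffAt u v (r + 1)) with ⟨r, hr, hv⟩ | hsp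
  · rw [mult_spe hd hω hr hv,
      mult_spe hd hω (Tmap_spinal hc hr) (Tmap_diffAt hc hv (Or.inr ⟨r, hr, rfl⟩))]
  · rw [mult_none hd hω hne h0 (fun r hr hd2 => hsp ⟨r, hr, hd2⟩)]
    by_contra hcc
    rcases mult_cases hd hω hcc with heq | hd0 | ⟨r, hr, hdr⟩
    · apply hne
      have := congrArg (Tmap d ξ η) heq
      rwa [Tmap_invol hc, Tmap_invol hc] at this
    · apply h0
      have := Tmap_diffAt hc hd0 (Or.inl rfl)
      rwa [Tmap_invol hc, Tmap_invol hc] at this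
    · apply hsp
      have hru : spinal d u r := by
        have h2 := Tmap_spinal hc hr
        rwa [Tmap_invol hc] at h2
      refine ⟨r, hru, ?_⟩
      have := Tmap_diffAt hc hdr (Or.inr ⟨r, hr, rfl⟩)
      rwa [Tmap_invol hc, Tmap_invol hc] at this

lemma exists_rootedIso (hd : 3 ≤ d) (hω : InOmega d m ω) :
    ∃ φ : ↥(Cof ξ) ≃ ↥(Cof η), IsRootedIso d m ω ξ η φ := by
  refine ⟨⟨fun u => ⟨Tmap d ξ η u.1, Tmap_cof hc u.2⟩,
           fun v => ⟨Tmap d ξ η v.1, Tmap_cof' hc v.2⟩,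
           fun u => Subtype.ext (Tmap_invol hc u.1),
           fun v => Subtype.ext (Tmap_invol hc v.1)⟩, ?_, ?_⟩
  · exact Subtype.ext (Tmap_xi hc)
  · intro u v
    exact (mult_Tmap hc hd hω u.1 v.1).symm

end Tsection

/-! ### the intrinsic spinal-pair relation -/

def SPI (d m : ℕ) (ω : ℕ → ((Fin m → ZMod d) →+ ZMod d)) (u v : Bd d) : Prop :=
  u ≠ v ∧ Spinal d u ∧ Spinal d v ∧ mult d m ω u v ≠ 0 ∧
  ∀ w, w ≠ u → w ≠ v → mult d m ω u w ≠ 0 → mult d m ω v w ≠ 0 → Spinal d w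

lemma spinal_zero_val (hd : 3 ≤ d) {u : Bd d} {r : ℕ} (h : spinal d u r) :
    u 0 = 0 ∨ u 0 = (d : ZMod d) - 1 := by
  rcases Nat.eq_zero_or_pos r with rfl | hr
  · exact Or.inl h.2
  · exact Or.inr (h.1 0 hr)

lemma one_not_spinal_val (hd : 3 ≤ d) {u : Bd d} (h : u 0 = 1) : ¬ Spinal d u := by
  rintro ⟨r, hr⟩
  rcases spinal_zero_val hd hr with h0 | h0
  · rw [h] at h0; exact one_ne_zero' hd h0
  · rw [h] at h0; exact one_ne_dsub hd h0

lemma SPI_iff (hd : 3 ≤ d) (hω : InOmega d m ω) (u v : Bd d) :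
    SPI d m ω u v ↔ ∃ r, spinal d u r ∧ spinal d v r ∧ DiffAt u v (r + 1) := by
  constructor
  · rintro ⟨hne, hSu, hSv, hm, hcom⟩
    rcases mult_cases hd hω hm with heq | h0 | ⟨r, hr, hdr⟩
    · exact absurd heq.symm hne
    · -- impossible: there is a common non-spinal neighbour
      exfalso
      obtain ⟨ru, hru⟩ := hSu
      obtain ⟨rv, hrv⟩ := hSv
      have hw0 : Function.update u 0 (1 : ZMod d) 0 = 1 := Function.update_self _ _ _
      have hwu : DiffAt u (Function.update u 0 (1 : ZMod d)) 0 := by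
        constructor
        · rw [hw0]
          rcases spinal_zero_val hd hru with h' | h'
          · rw [h']; exact one_ne_zero' hd
          · rw [h']; exact one_ne_dsub hd
        · intro n hn; exact Function.update_of_ne hn _ _
      have hwv : DiffAt v (Function.update u 0 (1 : ZMod d)) 0 := by
        constructor
        · rw [hw0]
          rcases spinal_zero_val hd hrv with h' | h'
          · rw [h']; exact one_ne_zero' hd
          · rw [h']; exact one_ne_dsub hd
        · intro n hn
          rw [Function.update_of_ne hn]
          exact (h0.2 n hn).symm
      have hmw1 : mult d m ω u (Function.update u 0 (1 : ZMod d)) ≠ 0 := by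
        rw [mult_diff0 hd hω hwu]; omega
      have hmw2 : mult d m ω v (Function.update u 0 (1 : ZMod d)) ≠ 0 := by
        rw [mult_diff0 hd hω hwv]; omega
      have hwnu : Function.update u 0 (1 : ZMod d) ≠ u := fun hcst => hwu.1 (by rw [hcst])
      have hwnv : Function.update u 0 (1 : ZMod d) ≠ v := fun hcst => hwv.1 (by rw [hcst])
      exact one_not_spinal_val hd hw0 (hcom _ hwnu hwnv hmw1 hmw2)
    · refine ⟨r, hr, ⟨fun i hi => ?_, ?_⟩, hdr⟩
      · rw [hdr.2 i (by omega)]; exact hr.1 i hi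
      · rw [hdr.2 r (by omega)]; exact hr.2
  · rintro ⟨r, hru, hrv, hdr⟩
    have hne : u ≠ v := fun hcst => hdr.1 (by rw [hcst])
    refine ⟨hne, ⟨r, hru⟩, ⟨r, hrv⟩, ?_, ?_⟩
    · rw [mult_spe hd hω hru hdr]
      have := Kc_pos (m := m) (ω := ω) hd
      omega
    · intro w hwu hwv hm1 hm2
      rcases mult_cases hd hω hm1 with heq | h0 | ⟨r1, hr1, hd1⟩
      · exact absurd heq hwu
      · rcases mult_cases hd hω hm2 with heq' | h0' | ⟨r2, hr2, hd2⟩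
        · exact absurd heq' hwv
        · exfalso
          apply hdr.1
          rw [← h0'.2 (r + 1) (by omega), h0.2 (r + 1) (by omega)]
        · exfalso
          have hr2r : r2 = r := spinal_unique hd hr2 hrv
          apply h0.1
          rw [hd2.2 0 (by omega), hdr.2 0 (by omega)]
      · have hr1r : r1 = r := spinal_unique hd hr1 hru
        subst hr1r
        refine ⟨r1, fun i hi => ?_, ?_⟩
        · rw [hd1.2 i (by omega)]; exact hr1.1 i hi
        · rw [hd1.2 r1 (by omega)]; exact hr1.2

/-! ### reachability with bounded spinal moves -/

def RAllow (d m : ℕ) (ω : ℕ → ((Fin m → ZMod d) →+ ZMod d)) (prev : Bd d → Prop)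
    (x y : Bd d) : Prop :=
  mult d m ω x y ≠ 0 ∧ (SPI d m ω x y → prev x)

def RA (d m : ℕ) (ω : ℕ → ((Fin m → ZMod d) →+ ZMod d)) (prev : Bd d → Prop) :
    Bd d → Bd d → Prop :=
  Relation.EqvGen (RAllow d m ω prev)

lemma RA_mono {p q : Bd d → Prop} (h : ∀ x, p x → q x) {x y : Bd d}
    (hr : RA d m ω p x y) : RA d m ω q x y :=
  Relation.EqvGen.mono (fun a b hab => ⟨hab.1, fun hs => h a (hab.2 hs)⟩) _ _ hr

lemma RAllow_sound (hd : 3 ≤ d) (hω : InOmega d m ω) {prev : Bd d → Prop} {s : ℕ}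
    (hp : ∀ x, prev x → ∃ r, r < s ∧ spinal d x r) {x y : Bd d}
    (h : RAllow d m ω prev x y) : ∀ n, s < n → x n = y n := by
  intro n hn
  rcases mult_cases hd hω h.1 with heq | h0 | ⟨r, hr, hdr⟩
  · rw [heq]
  · exact (h0.2 n (by omega)).symm
  · have hspi : SPI d m ω x y := by
      rw [SPI_iff hd hω]
      refine ⟨r, hr, ⟨fun i hi => ?_, ?_⟩, hdr⟩
      · rw [hdr.2 i (by omega)]; exact hr.1 i hi
      · rw [hdr.2 r (by omega)]; exact hr.2
    obtain ⟨r', hr', hsp'⟩ := hp x (h.2 hspi)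
    have : r' = r := spinal_unique hd hsp' hr
    subst this
    exact (hdr.2 n (by omega)).symm

lemma RA_sound (hd : 3 ≤ d) (hω : InOmega d m ω) {prev : Bd d → Prop} {s : ℕ}
    (hp : ∀ x, prev x → ∃ r, r < s ∧ spinal d x r) {x y : Bd d}
    (h : RA d m ω prev x y) : ∀ n, s < n → x n = y n := by
  induction h with
  | rel a b hab => exact RAllow_sound hd hω hp hab
  | refl a => exact fun n _ => rfl
  | symm a b hab ih => exact fun n hn => (ih n hn).symm
  | trans a b c h1 h2 ih1 ih2 => exact fun n hn => (ih1 n hn).trans (ih2 n hn)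

lemma RA_cof (hd : 3 ≤ d) (hω : InOmega d m ω) {prev : Bd d → Prop} {x y : Bd d}
    (h : RA d m ω prev x y) : Cofinal x y := by
  induction h with
  | rel a b hab =>
    rcases mult_cases hd hω hab.1 with heq | h0 | ⟨r, hr, hdr⟩
    · exact ⟨0, fun n _ => by rw [heq]⟩
    · exact ⟨1, fun n hn => (h0.2 n (by omega)).symm⟩
    · exact ⟨r + 2, fun n hn => (hdr.2 n (by omega)).symm⟩
  | refl a => exact ⟨0, fun _ _ => rfl⟩
  | symm a b hab ih => obtain ⟨N, hN⟩ := ih; exact ⟨N, fun n hn => (hN n hn).symm⟩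
  | trans a b c h1 h2 ih1 ih2 =>
    obtain ⟨N1, hN1⟩ := ih1
    obtain ⟨N2, hN2⟩ := ih2
    exact ⟨max N1 N2, fun n hn => (hN1 n (le_trans (le_max_left _ _) hn)).trans
      (hN2 n (le_trans (le_max_right _ _) hn))⟩

lemma RA_complete (hd : 3 ≤ d) (hω : InOmega d m ω) :
    ∀ (s : ℕ) (x y : Bd d), (∀ n, s < n → x n = y n) →
      RA d m ω (fun z => ∃ r, r < s ∧ spinal d z r) x y := by
  intro s
  induction s with
  | zero =>
    intro x y h
    rcases eq_or_ne (x 0) (y 0) with h0 | h0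
    · have : x = y := funext fun n => by
        rcases Nat.eq_zero_or_pos n with rfl | hn
        · exact h0
        · exact h n hn
      rw [this]
      exact Relation.EqvGen.refl y
    · refine Relation.EqvGen.rel _ _ ⟨?_, ?_⟩
      · rw [mult_diff0 hd hω ⟨fun hcst => h0 hcst.symm, fun n hn => (h n (by omega)).symm⟩]
        omega
      · intro hspi
        exfalso
        obtain ⟨r, _, _, hdr⟩ := (SPI_iff hd hω x y).mp hspi
        exact hdr.1 (h (r + 1) (by omega)).symm
  | succ s ih =>
    intro x y h
    have hmono : ∀ {a b : Bd d}, RA d m ω (fun z => ∃ r, r < s ∧ spinal d z r) a b →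
        RA d m ω (fun z => ∃ r, r < s + 1 ∧ spinal d z r) a b :=
      fun hab => RA_mono (fun z ⟨r, hr, hsp⟩ => ⟨r, by omega, hsp⟩) hab
    rcases eq_or_ne (x (s + 1)) (y (s + 1)) with he | hne
    · apply hmono
      apply ih
      intro n hn
      rcases eq_or_ne n (s + 1) with rfl | hns
      · exact he
      · exact h n (by omega)
    · -- go through the spinal vertex at level s
      set p1 : Bd d := fun n => if n < s then (d : ZMod d) - 1 else if n = s then 0 else x n
        with hp1
      have hsp1 : spinal d p1 s := by
        constructor
        · intro i hi
          show (if i < s then _ else _) = _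
          rw [if_pos hi]
        · show (if s < s then _ else _) = _
          rw [if_neg (lt_irrefl s), if_pos rfl]
      have hstep1 : RA d m ω (fun z => ∃ r, r < s + 1 ∧ spinal d z r) x p1 := by
        apply hmono
        apply ih
        intro n hn
        show x n = (if n < s then _ else _)
        rw [if_neg (by omega), if_neg (by omega)]
      set p2 : Bd d := Function.update p1 (s + 1) (y (s + 1)) with hp2
      have hd12 : DiffAt p1 p2 (s + 1) := by
        constructor
        · rw [hp2, Function.update_self]
          have : p1 (s + 1) = x (s + 1) := by
            show (if s + 1 < s then _ else _) = _
            rw [if_neg (by omega), if_neg (by omega)]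
          rw [this]
          exact fun hcst => hne hcst.symm
        · intro n hn
          rw [hp2]
          exact Function.update_of_ne hn _ _
      have hstep2 : RA d m ω (fun z => ∃ r, r < s + 1 ∧ spinal d z r) p1 p2 := by
        refine Relation.EqvGen.rel _ _ ⟨?_, fun _ => ⟨s, by omega, hsp1⟩⟩
        rw [mult_spe hd hω hsp1 hd12]
        have := Kc_pos (m := m) (ω := ω) hd
        omega
      have hstep3 : RA d m ω (fun z => ∃ r, r < s + 1 ∧ spinal d z r) p2 y := by
        apply hmono
        apply ih
        intro n hn
        rcases eq_or_ne n (s + 1) with rfl | hns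
        · rw [hp2, Function.update_self]
        · rw [hp2, Function.update_of_ne hns]
          show (if n < s then _ else _) = _
          rw [if_neg (by omega), if_neg (by omega)]
          exact h n (by omega)
      exact Relation.EqvGen.trans _ _ _ (Relation.EqvGen.trans _ _ _ hstep1 hstep2) hstep3

/-! ### the intrinsic level predicates -/

def KRel (d m : ℕ) (ω : ℕ → ((Fin m → ZMod d) →+ ZMod d)) (u v : Bd d) : Prop :=
  v = u ∨ SPI d m ω u v

def HH (d m : ℕ) (ω : ℕ → ((Fin m → ZMod d) →+ ZMod d)) (prev : Bd d → Prop)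
    (v : Bd d) : Prop :=
  ∃ w w', w ≠ w' ∧ RA d m ω prev v w ∧ RA d m ω prev v w' ∧
    Spinal d w ∧ ¬ prev w ∧ Spinal d w' ∧ ¬ prev w'

def stepP (d m : ℕ) (ω : ℕ → ((Fin m → ZMod d) →+ ZMod d)) (prev : Bd d → Prop)
    (u : Bd d) : Prop :=
  Spinal d u ∧ ∃ v, KRel d m ω u v ∧ ¬ HH d m ω prev v

def IntrLE (d m : ℕ) (ω : ℕ → ((Fin m → ZMod d) →+ ZMod d)) : ℕ → Bd d → Prop
  | 0 => stepP d m ω (fun _ => False)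
  | (k+1) => fun u => IntrLE d m ω k u ∨ stepP d m ω (IntrLE d m ω k) u

lemma step_accept (hd : 3 ≤ d) (hω : InOmega d m ω) {prev : Bd d → Prop} {s : ℕ}
    (hprev : ∀ x, prev x ↔ ∃ r, r < s ∧ spinal d x r) {u : Bd d} (h : spinal d u s) :
    stepP d m ω prev u := by
  refine ⟨⟨s, h⟩, Function.update u (s + 1) 1, ?_, ?_⟩
  · rcases eq_or_ne (u (s + 1)) 1 with he | hne
    · left
      rw [← he, Function.update_eq_self]
    · right
      rw [SPI_iff hd hω]
      refine ⟨s, h, ⟨fun i hi => ?_, ?_⟩, ?_, fun n hn => Function.update_of_ne hn _ _⟩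
      · rw [Function.update_of_ne (by omega)]; exact h.1 i hi
      · rw [Function.update_of_ne (by omega)]; exact h.2
      · rw [Function.update_self]; exact fun hcst => hne hcst.symm
  · rintro ⟨w, w', hww, hraw, hraw', hsw, hpw, hsw', hpw'⟩
    apply hww
    have hpimp : ∀ x, prev x → ∃ r, r < s ∧ spinal d x r := fun x hx => (hprev x).mp hx
    have hag : ∀ n, s < n → Function.update u (s + 1) 1 n = w n := RA_sound hd hω hpimp hraw
    have hag' : ∀ n, s < n → Function.update u (s + 1) 1 n = w' n := RA_sound hd hω hpimp hraw'
    have key : ∀ z : Bd d, Spinal d z → ¬ prev z →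
        (∀ n, s < n → Function.update u (s + 1) 1 n = z n) →
        z = fun n => if n < s then (d : ZMod d) - 1 else
          if n = s then 0 else Function.update u (s + 1) 1 n := by
      rintro z ⟨rz, hrz⟩ hpz hagz
      have hrzs : rz = s := by
        by_contra hrr
        rcases Nat.lt_or_ge rz s with hlt | hge
        · exact hpz ((hprev z).mpr ⟨rz, hlt, hrz⟩)
        · have hgt : s < rz := by omega
          rcases Nat.lt_or_ge (s + 1) rz with hlt2 | hge2
          · have h1 : z (s + 1) = (d : ZMod d) - 1 := hrz.1 (s + 1) hlt2
            have h2 : z (s + 1) = 1 := by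
              rw [← hagz (s + 1) (by omega), Function.update_self]
            rw [h2] at h1
            exact one_ne_dsub hd h1
          · have hrzeq : rz = s + 1 := by omega
            have h2 : z (s + 1) = 1 := by
              rw [← hagz (s + 1) (by omega), Function.update_self]
            rw [hrzeq] at hrz
            rw [hrz.2] at h2
            exact one_ne_zero' hd h2.symm
      subst hrzs
      funext n
      rcases Nat.lt_or_ge n rz with hlt | hge
      · rw [hrz.1 n hlt]
        show _ = (if n < rz then _ else _)
        rw [if_pos hlt]
      · rcases eq_or_ne n rz with rfl | hne
        · rw [hrz.2]
          show _ = (if n < n then _ else _)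
          rw [if_neg (lt_irrefl n), if_pos rfl]
        · have hn : rz < n := by omega
          rw [← hagz n hn]
          show _ = (if n < rz then _ else _)
          rw [if_neg (by omega), if_neg hne]
    rw [key w hsw hpw hag, key w' hsw' hpw' hag']

lemma step_bound (hd : 3 ≤ d) (hω : InOmega d m ω) {prev : Bd d → Prop} {s : ℕ}
    (hprev : ∀ x, prev x ↔ ∃ r, r < s ∧ spinal d x r) {u : Bd d}
    (h : stepP d m ω prev u) : ∃ r, r ≤ s ∧ spinal d u r := by
  obtain ⟨⟨ℓ, hℓ⟩, v, hkv, hnHH⟩ := h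
  refine ⟨ℓ, ?_, hℓ⟩
  by_contra hℓs
  have hℓs : s < ℓ := by omega
  -- v is spinal at ℓ and agrees with u away from ℓ+1
  have hvsp : spinal d v ℓ ∧ ∀ n, n ≠ ℓ + 1 → v n = u n := by
    rcases hkv with rfl | hspi
    · exact ⟨hℓ, fun n _ => rfl⟩
    · obtain ⟨r', hr'u, hr'v, hdr'⟩ := (SPI_iff hd hω u v).mp hspi
      have : r' = ℓ := spinal_unique hd hr'u hℓ
      subst this
      exact ⟨hr'v, hdr'.2⟩
  apply hnHH
  set w1 : Bd d := fun n => if n < s then (d : ZMod d) - 1 else if n = s then 0 else v n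
    with hw1
  have hsw1 : spinal d w1 s := by
    constructor
    · intro i hi
      show (if i < s then _ else _) = _
      rw [if_pos hi]
    · show (if s < s then _ else _) = _
      rw [if_neg (lt_irrefl s), if_pos rfl]
  refine ⟨w1, v, ?_, ?_, Relation.EqvGen.refl v, ⟨s, hsw1⟩, ?_, ⟨ℓ, hvsp.1⟩, ?_⟩
  · -- w1 ≠ v : they differ at position s
    intro hcst
    have h1 : w1 s = 0 := hsw1.2
    have h2 : v s = (d : ZMod d) - 1 := hvsp.1.1 s hℓs
    rw [hcst, h2] at h1
    exact dsub_ne_zero hd h1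
  · -- RA from v to w1
    apply RA_mono (fun z hz => (hprev z).mpr hz)
    apply RA_complete hd hω s
    intro n hn
    show v n = (if n < s then _ else _)
    rw [if_neg (by omega), if_neg (by omega)]
  · -- ¬ prev w1
    rw [hprev]
    rintro ⟨r, hrs, hsp⟩
    have := spinal_unique hd hsp hsw1
    omega
  · -- ¬ prev v
    rw [hprev]
    rintro ⟨r, hrs, hsp⟩
    have := spinal_unique hd hsp hvsp.1
    omega

lemma IntrLE_sem (hd : 3 ≤ d) (hω : InOmega d m ω) :
    ∀ (k : ℕ) (u : Bd d), IntrLE d m ω k u ↔ ∃ r, r ≤ k ∧ spinal d u r := by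
  intro k
  induction k with
  | zero =>
    intro u
    have hprev : ∀ x : Bd d, False ↔ ∃ r, r < 0 ∧ spinal d x r :=
      fun x => ⟨False.elim, fun ⟨r, hr, _⟩ => by omega⟩
    constructor
    · intro h
      exact step_bound hd hω hprev h
    · rintro ⟨r, hr, hsp⟩
      have : r = 0 := by omega
      subst this
      exact step_accept hd hω hprev hsp
  | succ k ih =>
    intro u
    have hprev : ∀ x : Bd d, IntrLE d m ω k x ↔ ∃ r, r < k + 1 ∧ spinal d x r :=
      fun x => (ih x).trans ⟨fun ⟨r, hr, hsp⟩ => ⟨r, by omega, hsp⟩,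
        fun ⟨r, hr, hsp⟩ => ⟨r, by omega, hsp⟩⟩
    constructor
    · rintro (h | h)
      · obtain ⟨r, hr, hsp⟩ := (ih u).mp h
        exact ⟨r, by omega, hsp⟩
      · obtain ⟨r, hr, hsp⟩ := step_bound hd hω hprev h
        exact ⟨r, hr, hsp⟩
    · rintro ⟨r, hr, hsp⟩
      rcases Nat.lt_or_ge r (k + 1) with hlt | hge
      · exact Or.inl ((ih u).mpr ⟨r, by omega, hsp⟩)
      · have : r = k + 1 := by omega
        subst this
        exact Or.inr (step_accept hd hω hprev hsp)

/-! ### transport along a mult-preserving bijection -/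

def multPres (d m : ℕ) (ω : ℕ → ((Fin m → ZMod d) →+ ZMod d)) {ξ η : Bd d}
    (φ : ↥(Cof ξ) ≃ ↥(Cof η)) : Prop :=
  ∀ u v : ↥(Cof ξ), mult d m ω u.1 v.1 = mult d m ω (φ u).1 (φ v).1

lemma multPres_symm {ξ η : Bd d} {φ : ↥(Cof ξ) ≃ ↥(Cof η)} (h : multPres d m ω φ) :
    multPres d m ω φ.symm := by
  intro u v
  have h2 := h (φ.symm u) (φ.symm v)
  rw [Equiv.apply_symm_apply, Equiv.apply_symm_apply] at h2
  exact h2.symm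

lemma Cof_closed {ξ u w : Bd d} (hu : u ∈ Cof ξ) (h : Cofinal u w) : w ∈ Cof ξ := by
  obtain ⟨N1, hN1⟩ := hu
  obtain ⟨N2, hN2⟩ := h
  exact ⟨max N1 N2, fun n hn => (hN1 n (le_trans (le_max_left _ _) hn)).trans
    (hN2 n (le_trans (le_max_right _ _) hn))⟩

lemma mult_cofinal (hd : 3 ≤ d) (hω : InOmega d m ω) {u v : Bd d}
    (h : mult d m ω u v ≠ 0) : Cofinal u v := by
  rcases mult_cases hd hω h with heq | h0 | ⟨r, hr, hdr⟩
  · exact ⟨0, fun n _ => by rw [heq]⟩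
  · exact ⟨1, fun n hn => (h0.2 n (by omega)).symm⟩
  · exact ⟨r + 2, fun n hn => (hdr.2 n (by omega)).symm⟩

lemma Spinal_iff_mult (hd : 3 ≤ d) (hω : InOmega d m ω) (u : Bd d) :
    Spinal d u ↔ mult d m ω u u ≠ NB d m - 1 := by
  have hK := Kc_pos (m := m) (ω := ω) hd
  have hKN := Kc_lt_NB (m := m) (ω := ω) hd hω
  constructor
  · rintro ⟨r, hr⟩
    rw [mult_self_spinal hd hω hr]
    omega
  · intro h
    by_contra hs
    rw [mult_self_nonspinal hd hω hs] at h
    omega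

section Transport

variable {ξ η : Bd d} (hd : 3 ≤ d) (hω : InOmega d m ω)
variable (φ : ↥(Cof ξ) ≃ ↥(Cof η)) (hφ : multPres d m ω φ)

include hd hω hφ

lemma tS (u : ↥(Cof ξ)) : Spinal d u.1 ↔ Spinal d (φ u).1 := by
  rw [Spinal_iff_mult hd hω, Spinal_iff_mult hd hω, hφ u u]

lemma tSPI_fwd (u v : ↥(Cof ξ)) (h : SPI d m ω u.1 v.1) :
    SPI d m ω (φ u).1 (φ v).1 := by
  obtain ⟨hne, hSu, hSv, hm, hcom⟩ := h
  refine ⟨?_, (tS hd hω φ hφ u).mp hSu, (tS hd hω φ hφ v).mp hSv, ?_, ?_⟩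
  · intro hcst
    exact hne (congrArg Subtype.val (φ.injective (Subtype.ext hcst)))
  · rw [← hφ u v]; exact hm
  · intro w hwu hwv hm1 hm2
    have hwcof : w ∈ Cof η := Cof_closed (φ u).2 (mult_cofinal hd hω hm1)
    have hval : (φ (φ.symm ⟨w, hwcof⟩)).1 = w := by rw [Equiv.apply_symm_apply]
    have hm1' : mult d m ω u.1 (φ.symm ⟨w, hwcof⟩).1 ≠ 0 := by
      rw [hφ u (φ.symm ⟨w, hwcof⟩), hval]; exact hm1
    have hm2' : mult d m ω v.1 (φ.symm ⟨w, hwcof⟩).1 ≠ 0 := by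
      rw [hφ v (φ.symm ⟨w, hwcof⟩), hval]; exact hm2
    have hne1 : (φ.symm ⟨w, hwcof⟩).1 ≠ u.1 := by
      intro hcst
      apply hwu
      rw [← hval, Subtype.ext hcst]
    have hne2 : (φ.symm ⟨w, hwcof⟩).1 ≠ v.1 := by
      intro hcst
      apply hwv
      rw [← hval, Subtype.ext hcst]
    have hsp := hcom _ hne1 hne2 hm1' hm2'
    have := (tS hd hω φ hφ (φ.symm ⟨w, hwcof⟩)).mp hsp
    rwa [hval] at this

lemma tSPI (u v : ↥(Cof ξ)) : SPI d m ω u.1 v.1 ↔ SPI d m ω (φ u).1 (φ v).1 := by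
  refine ⟨tSPI_fwd hd hω φ hφ u v, fun h => ?_⟩
  have h2 := tSPI_fwd hd hω φ.symm (multPres_symm hφ) (φ u) (φ v) h
  rwa [Equiv.symm_apply_apply, Equiv.symm_apply_apply] at h2

lemma tRA_fwd (prev : Bd d → Prop) (hp : ∀ x : ↥(Cof ξ), prev x.1 ↔ prev (φ x).1)
    {x y : Bd d} (h : RA d m ω prev x y) :
    ∀ (hx : x ∈ Cof ξ) (hy : y ∈ Cof ξ), RA d m ω prev (φ ⟨x, hx⟩).1 (φ ⟨y, hy⟩).1 := by
  induction h with
  | rel a b hab =>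
    intro ha hb
    refine Relation.EqvGen.rel _ _ ⟨?_, ?_⟩
    · rw [← hφ ⟨a, ha⟩ ⟨b, hb⟩]; exact hab.1
    · intro hspi
      have hSab : SPI d m ω a b := (tSPI hd hω φ hφ ⟨a, ha⟩ ⟨b, hb⟩).mpr hspi
      exact (hp ⟨a, ha⟩).mp (hab.2 hSab)
  | refl a =>
    intro ha hb
    exact Relation.EqvGen.refl _
  | symm a b hab ih =>
    intro hb ha
    exact Relation.EqvGen.symm _ _ (ih ha hb)
  | trans a b c h1 h2 ih1 ih2 =>
    intro ha hc
    have hb : b ∈ Cof ξ := Cof_closed ha (RA_cof hd hω h1)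
    exact Relation.EqvGen.trans _ _ _ (ih1 ha hb) (ih2 hb hc)

lemma tHH_fwd (prev : Bd d → Prop) (hp : ∀ x : ↥(Cof ξ), prev x.1 ↔ prev (φ x).1)
    (v : ↥(Cof ξ)) (h : HH d m ω prev v.1) : HH d m ω prev (φ v).1 := by
  obtain ⟨w, w', hne, h1, h2, s1, p1, s2, p2⟩ := h
  have hw : w ∈ Cof ξ := Cof_closed v.2 (RA_cof hd hω h1)
  have hw' : w' ∈ Cof ξ := Cof_closed v.2 (RA_cof hd hω h2)
  refine ⟨(φ ⟨w, hw⟩).1, (φ ⟨w', hw'⟩).1, ?_, ?_, ?_, ?_, ?_, ?_, ?_⟩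
  · intro hcst
    exact hne (congrArg Subtype.val (φ.injective (Subtype.ext hcst)))
  · exact tRA_fwd hd hω φ hφ prev hp h1 v.2 hw
  · exact tRA_fwd hd hω φ hφ prev hp h2 v.2 hw'
  · exact (tS hd hω φ hφ ⟨w, hw⟩).mp s1
  · exact fun hcst => p1 ((hp ⟨w, hw⟩).mpr hcst)
  · exact (tS hd hω φ hφ ⟨w', hw'⟩).mp s2
  · exact fun hcst => p2 ((hp ⟨w', hw'⟩).mpr hcst)

lemma tStep_fwd (prev : Bd d → Prop) (hp : ∀ x : ↥(Cof ξ), prev x.1 ↔ prev (φ x).1)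
    (hp' : ∀ x : ↥(Cof η), prev x.1 ↔ prev (φ.symm x).1)
    (u : ↥(Cof ξ)) (h : stepP d m ω prev u.1) : stepP d m ω prev (φ u).1 := by
  obtain ⟨hsp, v, hkv, hnHH⟩ := h
  have hvcof : v ∈ Cof ξ := by
    rcases hkv with heq | hspi
    · rw [heq]; exact u.2
    · exact Cof_closed u.2 (mult_cofinal hd hω hspi.2.2.2.1)
  refine ⟨(tS hd hω φ hφ u).mp hsp, (φ ⟨v, hvcof⟩).1, ?_, ?_⟩
  · rcases hkv with heq | hspi
    · left
      have : (⟨v, hvcof⟩ : ↥(Cof ξ)) = u := Subtype.ext heq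
      rw [this]
    · right
      exact tSPI_fwd hd hω φ hφ u ⟨v, hvcof⟩ hspi
  · intro hHH
    apply hnHH
    have h2 := tHH_fwd hd hω φ.symm (multPres_symm hφ) prev hp' (φ ⟨v, hvcof⟩) hHH
    rwa [Equiv.symm_apply_apply] at h2

lemma tIntr : ∀ (k : ℕ) (u : ↥(Cof ξ)), IntrLE d m ω k u.1 ↔ IntrLE d m ω k (φ u).1 := by
  intro k
  induction k with
  | zero =>
    intro u
    constructor
    · intro h
      exact tStep_fwd hd hω φ hφ (fun _ => False)
        (fun x => Iff.rfl) (fun x => Iff.rfl) u h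
    · intro h
      have h2 := tStep_fwd hd hω φ.symm (multPres_symm hφ) (fun _ => False)
        (fun x => Iff.rfl) (fun x => Iff.rfl) (φ u) h
      rwa [Equiv.symm_apply_apply] at h2
  | succ k ih =>
    intro u
    have hp : ∀ x : ↥(Cof ξ), IntrLE d m ω k x.1 ↔ IntrLE d m ω k (φ x).1 := ih
    have hp' : ∀ x : ↥(Cof η), IntrLE d m ω k x.1 ↔ IntrLE d m ω k (φ.symm x).1 := by
      intro x
      have := ih (φ.symm x)
      rw [Equiv.apply_symm_apply] at this
      exact this.symm
    constructor
    · rintro (h | h)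
      · exact Or.inl ((hp u).mp h)
      · exact Or.inr (tStep_fwd hd hω φ hφ _ hp hp' u h)
    · rintro (h | h)
      · exact Or.inl ((hp u).mpr h)
      · refine Or.inr ?_
        have h2 := tStep_fwd hd hω φ.symm (multPres_symm hφ) _ hp'
          (fun x => by rw [Equiv.symm_symm]; exact hp x) (φ u) h
        rwa [Equiv.symm_apply_apply] at h2

end Transport

/-! ### the probes reading the root data off the graph -/

def prevAt (d m : ℕ) (ω : ℕ → ((Fin m → ZMod d) →+ ZMod d)) : ℕ → Bd d → Prop
  | 0 => fun _ => False
  | (k+1) => IntrLE d m ω k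

lemma prevAt_sem (hd : 3 ≤ d) (hω : InOmega d m ω) (k : ℕ) (x : Bd d) :
    prevAt d m ω k x ↔ ∃ r, r < k ∧ spinal d x r := by
  cases k with
  | zero => exact ⟨False.elim, fun ⟨r, hr, _⟩ => by omega⟩
  | succ k =>
    rw [show prevAt d m ω (k+1) x = IntrLE d m ω k x from rfl, IntrLE_sem hd hω]
    exact ⟨fun ⟨r, hr, hsp⟩ => ⟨r, by omega, hsp⟩, fun ⟨r, hr, hsp⟩ => ⟨r, by omega, hsp⟩⟩

lemma scale_iff (hd : 3 ≤ d) (hω : InOmega d m ω) (k : ℕ) (x y : Bd d) :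
    RA d m ω (prevAt d m ω k) x y ↔ ∀ n, k < n → x n = y n := by
  constructor
  · exact fun h => RA_sound hd hω (fun z hz => (prevAt_sem hd hω k z).mp hz) h
  · intro h
    exact RA_mono (fun z hz => (prevAt_sem hd hω k z).mpr hz) (RA_complete hd hω k x y h)

def MM (d : ℕ) (ζ : Bd d) (p : ℕ) : Prop :=
  ∃ l, p < l ∧ ζ l = 0 ∧ ∀ i, p ≤ i → i < l → ζ i = (d : ZMod d) - 1

lemma probeZ_zero (hd : 3 ≤ d) (hω : InOmega d m ω) (ζ : Bd d) :
    IntrLE d m ω 0 ζ ↔ ζ 0 = 0 := by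
  rw [IntrLE_sem hd hω]
  constructor
  · rintro ⟨r, hr, hsp⟩
    have : r = 0 := by omega
    subst this
    exact hsp.2
  · intro h
    exact ⟨0, le_rfl, fun i hi => absurd hi (by omega), h⟩

lemma probeM_zero (hd : 3 ≤ d) (hω : InOmega d m ω) (ζ : Bd d) :
    (Spinal d ζ ∧ ¬ IntrLE d m ω 0 ζ) ↔ MM d ζ 0 := by
  rw [IntrLE_sem hd hω]
  constructor
  · rintro ⟨⟨r, hr⟩, h0⟩
    have hrpos : 0 < r := by
      rcases Nat.eq_zero_or_pos r with rfl | h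
      · exact absurd ⟨0, le_rfl, hr⟩ h0
      · exact h
    exact ⟨r, hrpos, hr.2, fun i _ hi => hr.1 i hi⟩
  · rintro ⟨l, hl, hz, hrun⟩
    have hsp : spinal d ζ l := ⟨fun i hi => hrun i (by omega) hi, hz⟩
    refine ⟨⟨l, hsp⟩, ?_⟩
    rintro ⟨r, hr, hsp'⟩
    have := spinal_unique hd hsp' hsp
    omega

lemma probeZ_succ (hd : 3 ≤ d) (hω : InOmega d m ω) (ζ : Bd d) (q : ℕ) :
    (∃ w, RA d m ω (prevAt d m ω q) ζ w ∧ IntrLE d m ω (q+1) w ∧ ¬ IntrLE d m ω q w)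
      ↔ ζ (q+1) = 0 := by
  constructor
  · rintro ⟨w, hra, h1, h0⟩
    have htail := (scale_iff hd hω q ζ w).mp hra
    obtain ⟨r, hr, hsp⟩ := (IntrLE_sem hd hω (q+1) w).mp h1
    have hrq : r = q + 1 := by
      by_contra hne
      exact h0 ((IntrLE_sem hd hω q w).mpr ⟨r, by omega, hsp⟩)
    subst hrq
    rw [htail (q+1) (by omega)]
    exact hsp.2
  · intro h
    refine ⟨fun n => if n < q + 1 then (d : ZMod d) - 1 else ζ n, ?_, ?_, ?_⟩
    · rw [scale_iff hd hω]
      intro n hn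
      show ζ n = (if n < q + 1 then _ else _)
      rw [if_neg (by omega)]
    · have hsp : spinal d (fun n => if n < q + 1 then (d : ZMod d) - 1 else ζ n) (q+1) := by
        constructor
        · intro i hi
          show (if i < q + 1 then _ else _) = _
          rw [if_pos hi]
        · show (if q + 1 < q + 1 then _ else _) = _
          rw [if_neg (by omega)]
          exact h
      exact (IntrLE_sem hd hω _ _).mpr ⟨q+1, le_rfl, hsp⟩
    · intro hcc
      obtain ⟨r, hr, hsp'⟩ := (IntrLE_sem hd hω q _).mp hcc
      have hsp : spinal d (fun n => if n < q + 1 then (d : ZMod d) - 1 else ζ n) (q+1) := by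
        constructor
        · intro i hi
          show (if i < q + 1 then _ else _) = _
          rw [if_pos hi]
        · show (if q + 1 < q + 1 then _ else _) = _
          rw [if_neg (by omega)]
          exact h
      have := spinal_unique hd hsp' hsp
      omega

lemma probeM_succ (hd : 3 ≤ d) (hω : InOmega d m ω) (ζ : Bd d) (q : ℕ) :
    (∃ w, RA d m ω (prevAt d m ω q) ζ w ∧ Spinal d w ∧ ¬ IntrLE d m ω (q+1) w)
      ↔ MM d ζ (q+1) := by
  constructor
  · rintro ⟨w, hra, ⟨r, hsp⟩, h0⟩
    have htail := (scale_iff hd hω q ζ w).mp hra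
    have hrq : q + 1 < r := by
      by_contra hle
      exact h0 ((IntrLE_sem hd hω (q+1) w).mpr ⟨r, by omega, hsp⟩)
    refine ⟨r, by omega, ?_, fun i h1 h2 => ?_⟩
    · rw [htail r (by omega)]
      exact hsp.2
    · rw [htail i (by omega)]
      exact hsp.1 i h2
  · rintro ⟨l, hl, hz, hrun⟩
    refine ⟨fun n => if n < q + 1 then (d : ZMod d) - 1 else ζ n, ?_, ?_, ?_⟩
    · rw [scale_iff hd hω]
      intro n hn
      show ζ n = (if n < q + 1 then _ else _)
      rw [if_neg (by omega)]
    · refine ⟨l, fun i hi => ?_, ?_⟩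
      · show (if i < q + 1 then _ else _) = _
        split_ifs with hcase
        · rfl
        · exact hrun i (by omega) hi
      · show (if l < q + 1 then _ else _) = _
        rw [if_neg (by omega)]
        exact hz
    · intro hcc
      obtain ⟨r, hr, hsp'⟩ := (IntrLE_sem hd hω (q+1) _).mp hcc
      have hsp : spinal d (fun n => if n < q + 1 then (d : ZMod d) - 1 else ζ n) l := by
        refine ⟨fun i hi => ?_, ?_⟩
        · show (if i < q + 1 then _ else _) = _
          split_ifs with hcase
          · rfl
          · exact hrun i (by omega) hi
        · show (if l < q + 1 then _ else _) = _
          rw [if_neg (by omega)]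
          exact hz
      have := spinal_unique hd hsp' hsp
      omega

lemma compat_of_data {ζ ζ' : Bd d} (hz : ∀ p, ζ p = 0 ↔ ζ' p = 0)
    (hm : ∀ p, MM d ζ p ↔ MM d ζ' p) : Compatible d ζ ζ' := by
  refine ⟨hz, fun p hp r => ?_⟩
  constructor
  · rintro ⟨hrp, hrun⟩
    refine ⟨hrp, fun i h1 h2 => ?_⟩
    have hMM : MM d ζ i := ⟨p, h2, hp, fun j hj1 hj2 => hrun j (by omega) hj2⟩
    obtain ⟨l, hl1, hl2, hl3⟩ := (hm i).mp hMM
    exact hl3 i le_rfl hl1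
  · rintro ⟨hrp, hrun⟩
    refine ⟨hrp, fun i h1 h2 => ?_⟩
    have hMM : MM d ζ' i := ⟨p, h2, (hz p).mp hp, fun j hj1 hj2 => hrun j (by omega) hj2⟩
    obtain ⟨l, hl1, hl2, hl3⟩ := (hm i).mpr hMM
    exact hl3 i le_rfl hl1

/-! ### the forward direction -/

section Forward

variable {ξ η : Bd d} (hd : 3 ≤ d) (hω : InOmega d m ω)
variable (φ : ↥(Cof ξ) ≃ ↥(Cof η)) (hφ : multPres d m ω φ)
variable (hroot : (φ ⟨ξ, self_mem_Cof ξ⟩ : Bd d) = η)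

include hd hω hφ hroot

lemma probe_fwd (q : ℕ) (P : Bd d → Prop) (hP : ∀ w : ↥(Cof ξ), P w.1 ↔ P (φ w).1)
    (h : ∃ w, RA d m ω (prevAt d m ω q) ξ w ∧ P w) :
    ∃ w, RA d m ω (prevAt d m ω q) η w ∧ P w := by
  obtain ⟨w, hra, hPw⟩ := h
  have hw : w ∈ Cof ξ := Cof_closed (self_mem_Cof ξ) (RA_cof hd hω hra)
  have hprev : ∀ x : ↥(Cof ξ), prevAt d m ω q x.1 ↔ prevAt d m ω q (φ x).1 := by
    intro x
    cases q with
    | zero => exact Iff.rfl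
    | succ k => exact tIntr hd hω φ hφ k x
  refine ⟨(φ ⟨w, hw⟩).1, ?_, (hP ⟨w, hw⟩).mp hPw⟩
  have := tRA_fwd hd hω φ hφ (prevAt d m ω q) hprev hra (self_mem_Cof ξ) hw
  rwa [hroot] at this

end Forward

lemma hroot_symm {ξ η : Bd d} (φ : ↥(Cof ξ) ≃ ↥(Cof η))
    (hroot : (φ ⟨ξ, self_mem_Cof ξ⟩ : Bd d) = η) :
    (φ.symm ⟨η, self_mem_Cof η⟩ : Bd d) = ξ := by
  have : (⟨η, self_mem_Cof η⟩ : ↥(Cof η)) = φ ⟨ξ, self_mem_Cof ξ⟩ := (Subtype.ext hroot).symm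
  rw [this, Equiv.symm_apply_apply]

lemma compatible_of_iso (hd : 3 ≤ d) (hω : InOmega d m ω) {ξ η : Bd d}
    (φ : ↥(Cof ξ) ≃ ↥(Cof η)) (hiso : IsRootedIso d m ω ξ η φ) :
    Compatible d ξ η := by
  obtain ⟨hroot, hmult⟩ := hiso
  have hφ : multPres d m ω φ := hmult
  have hrootv : (φ ⟨ξ, self_mem_Cof ξ⟩ : Bd d) = η := by rw [hroot]
  have hrootv' : (φ.symm ⟨η, self_mem_Cof η⟩ : Bd d) = ξ := hroot_symm φ hrootv
  have hφ' : multPres d m ω φ.symm := multPres_symm hφ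
  apply compat_of_data
  · intro p
    cases p with
    | zero =>
      rw [← probeZ_zero hd hω ξ, ← probeZ_zero hd hω η]
      have h2 := tIntr hd hω φ hφ 0 ⟨ξ, self_mem_Cof ξ⟩
      rw [hrootv] at h2
      exact h2
    | succ q =>
      rw [← probeZ_succ hd hω ξ q, ← probeZ_succ hd hω η q]
      have hPiff : ∀ w : ↥(Cof ξ),
          (IntrLE d m ω (q+1) w.1 ∧ ¬ IntrLE d m ω q w.1)
            ↔ (IntrLE d m ω (q+1) (φ w).1 ∧ ¬ IntrLE d m ω q (φ w).1) :=
        fun w => and_congr (tIntr hd hω φ hφ (q+1) w) (not_congr (tIntr hd hω φ hφ q w))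
      have hPiff' : ∀ w : ↥(Cof η),
          (IntrLE d m ω (q+1) w.1 ∧ ¬ IntrLE d m ω q w.1)
            ↔ (IntrLE d m ω (q+1) (φ.symm w).1 ∧ ¬ IntrLE d m ω q (φ.symm w).1) :=
        fun w => and_congr (tIntr hd hω φ.symm hφ' (q+1) w)
          (not_congr (tIntr hd hω φ.symm hφ' q w))
      constructor
      · rintro ⟨w, hra, h1, h0⟩
        obtain ⟨w', hra', hP'⟩ := probe_fwd hd hω φ hφ hrootv q
          (fun w => IntrLE d m ω (q+1) w ∧ ¬ IntrLE d m ω q w) hPiff ⟨w, hra, h1, h0⟩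
        exact ⟨w', hra', hP'.1, hP'.2⟩
      · rintro ⟨w, hra, h1, h0⟩
        obtain ⟨w', hra', hP'⟩ := probe_fwd hd hω φ.symm hφ' hrootv' q
          (fun w => IntrLE d m ω (q+1) w ∧ ¬ IntrLE d m ω q w) hPiff' ⟨w, hra, h1, h0⟩
        exact ⟨w', hra', hP'.1, hP'.2⟩
  · intro p
    cases p with
    | zero =>
      rw [← probeM_zero hd hω ξ, ← probeM_zero hd hω η]
      have h2 := tIntr hd hω φ hφ 0 ⟨ξ, self_mem_Cof ξ⟩
      have h3 := tS hd hω φ hφ ⟨ξ, self_mem_Cof ξ⟩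
      rw [hrootv] at h2 h3
      exact and_congr h3 (not_congr h2)
    | succ q =>
      rw [← probeM_succ hd hω ξ q, ← probeM_succ hd hω η q]
      have hPiff : ∀ w : ↥(Cof ξ),
          (Spinal d w.1 ∧ ¬ IntrLE d m ω (q+1) w.1)
            ↔ (Spinal d (φ w).1 ∧ ¬ IntrLE d m ω (q+1) (φ w).1) :=
        fun w => and_congr (tS hd hω φ hφ w) (not_congr (tIntr hd hω φ hφ (q+1) w))
      have hPiff' : ∀ w : ↥(Cof η),
          (Spinal d w.1 ∧ ¬ IntrLE d m ω (q+1) w.1)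
            ↔ (Spinal d (φ.symm w).1 ∧ ¬ IntrLE d m ω (q+1) (φ.symm w).1) :=
        fun w => and_congr (tS hd hω φ.symm hφ' w)
          (not_congr (tIntr hd hω φ.symm hφ' (q+1) w))
      constructor
      · rintro ⟨w, hra, h1, h0⟩
        obtain ⟨w', hra', hP'⟩ := probe_fwd hd hω φ hφ hrootv q
          (fun w => Spinal d w ∧ ¬ IntrLE d m ω (q+1) w) hPiff ⟨w, hra, h1, h0⟩
        exact ⟨w', hra', hP'.1, hP'.2⟩
      · rintro ⟨w, hra, h1, h0⟩
        obtain ⟨w', hra', hP'⟩ := probe_fwd hd hω φ.symm hφ' hrootv' q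
          (fun w => Spinal d w ∧ ¬ IntrLE d m ω (q+1) w) hPiff' ⟨w, hra, h1, h0⟩
        exact ⟨w', hra', hP'.1, hP'.2⟩

end SpinalProof

/-- `(Γ_ξ, ξ)` and `(Γ_η, η)` are isomorphic as rooted, undirected,
unlabeled graphs iff `ξ ∼ η`. -/
theorem rooted_iso_iff_compatible (d m : ℕ) (hd : 3 ≤ d) (hm : 1 ≤ m)
    (ω : ℕ → ((Fin m → ZMod d) →+ ZMod d)) (hω : InOmega d m ω) (ξ η : Bd d) :
    (∃ φ : ↥(Cof ξ) ≃ ↥(Cof η), IsRootedIso d m ω ξ η φ) ↔ Compatible d ξ η := by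
  constructor
  · rintro ⟨φ, hiso⟩
    exact SpinalProof.compatible_of_iso hd hω φ hiso
  · intro hc
    exact SpinalProof.exists_rootedIso hc hd hω

end
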